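/- Let G be a finite simple graph in which every vertex has positive degree, and let x, y be adjacent vertices with N(x) \ {y} = N(y) \ {x} (connected twins) and common degree d = d_x = d_y. Let v be the vector with v_x = 1/√2, v_y = −1/√2, and v_z = 0 for all other vertices z. Then L v = ((d+1)/d) v, i.e., (d+1)/d is an eigenvalue of the normalized Laplacian L. Moreover, for every finite orthonormal family v_1, …, v_k of eigenvectors of L with eigenvalue (d+1)/d such that v_1 = v, one has (1/k) Σ_{i=1}^k F(v_i, (d+1)/d, {x,y}) ≤ (1/k)·(d−1)/d². -/

import Mathlib

open Finset

variable {V : Type*} [Fintype V] [DecidableEq V]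

/-- The normalized Laplacian `L = I - D^{-1/2} A D^{-1/2}` of a simple graph. -/
noncomputable def normLap (G : SimpleGraph V) [DecidableRel G.Adj] : Matrix V V ℝ :=
  fun x y =>
    if x = y then 1
    else if G.Adj x y then -(1 / Real.sqrt ((G.degree x : ℝ) * (G.degree y : ℝ)))
    else 0

/-- The Aksoy–Purvine–Young edge-derivative expression
`F(v, λ, {x,y}) = (1-λ)(v_x²/d_x + v_y²/d_y) − 2 v_x v_y / √(d_x d_y)`. -/
noncomputable def edgeDeriv (G : SimpleGraph V) [DecidableRel G.Adj]
    (v : V → ℝ) (lam : ℝ) (x y : V) : ℝ :=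
  (1 - lam) * (v x ^ 2 / (G.degree x : ℝ) + v y ^ 2 / (G.degree y : ℝ))
    - 2 * (v x * v y) / Real.sqrt ((G.degree x : ℝ) * (G.degree y : ℝ))

theorem connected_twins_edge_derivative
    (G : SimpleGraph V) [DecidableRel G.Adj]
    (hdeg : ∀ z : V, 0 < G.degree z)
    (x y : V) (hxy : G.Adj x y)
    (htwin : G.neighborFinset x \ {y} = G.neighborFinset y \ {x})
    (d : ℕ) (hdx : G.degree x = d) (hdy : G.degree y = d)
    (v : V → ℝ)
    (hv : ∀ z, v z = if z = x then 1 / Real.sqrt 2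
      else if z = y then -(1 / Real.sqrt 2) else 0) :
    (normLap G).mulVec v = (((d : ℝ) + 1) / d) • v ∧
      ∀ (k : ℕ) (hk : 0 < k) (w : Fin k → V → ℝ),
        w ⟨0, hk⟩ = v →
        (∀ i j, (∑ z, w i z * w j z) = if i = j then 1 else 0) →
        (∀ i, (normLap G).mulVec (w i) = (((d : ℝ) + 1) / d) • w i) →
        (1 / (k : ℝ)) * ∑ i, edgeDeriv G (w i) (((d : ℝ) + 1) / d) x y ≤
          (1 / (k : ℝ)) * (((d : ℝ) - 1) / (d : ℝ) ^ 2) := by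
  classical
  have hx_ne_y : x ≠ y := G.ne_of_adj hxy
  have hdpos : (0:ℝ) < d := by
    have := hdeg x; rw [hdx] at this; exact_mod_cast this
  have hdne : (d:ℝ) ≠ 0 := ne_of_gt hdpos
  have hs2 : Real.sqrt 2 ≠ 0 := by positivity
  have hb2 : Real.sqrt 2 * Real.sqrt 2 = 2 := Real.mul_self_sqrt (by norm_num)
  have hsd : Real.sqrt ((d:ℝ) * d) = d := Real.sqrt_mul_self hdpos.le
  have hvx : v x = 1 / Real.sqrt 2 := by rw [hv]; simp
  have hvy : v y = -(1 / Real.sqrt 2) := by rw [hv]; simp [Ne.symm hx_ne_y]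
  have hvz : ∀ z, z ≠ x → z ≠ y → v z = 0 := fun z h1 h2 => by rw [hv]; simp [h1, h2]
  have hadj : ∀ z, z ≠ x → z ≠ y → (G.Adj x z ↔ G.Adj y z) := by
    intro z h1 h2
    have h := Finset.ext_iff.mp htwin z
    simpa [SimpleGraph.mem_neighborFinset, h1, h2, Finset.mem_sdiff] using h
  have hsum : ∀ f : V → ℝ, (∑ z, f z * v z) = f x * v x + f y * v y := by
    intro f
    refine Finset.sum_eq_add_of_mem x y (Finset.mem_univ x) (Finset.mem_univ y) hx_ne_y ?_
    intro c _ hc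
    rw [hvz c hc.1 hc.2, mul_zero]
  constructor
  · funext z
    have hz : (normLap G).mulVec v z = normLap G z x * v x + normLap G z y * v y := by
      simp only [Matrix.mulVec, dotProduct]
      exact hsum _
    rw [hz, Pi.smul_apply, smul_eq_mul]
    by_cases hzx : z = x
    · subst hzx
      have h1 : normLap G z z = 1 := by simp [normLap]
      have h2 : normLap G z y = -(1/(d:ℝ)) := by
        simp [normLap, hx_ne_y, hxy, hdx, hdy, hsd]
      rw [h1, h2, hvx, hvy]
      field_simp
      try ring
    · by_cases hzy : z = y
      · subst hzy
        have h1 : normLap G z z = 1 := by simp [normLap]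
        have h2 : normLap G z x = -(1/(d:ℝ)) := by
          simp [normLap, Ne.symm hx_ne_y, G.adj_symm hxy, hdx, hdy, hsd]
        rw [h2, h1, hvx, hvy]
        field_simp
        ring
      · rw [hvz z hzx hzy, mul_zero]
        by_cases ha : G.Adj z x
        · have ha' : G.Adj z y := ((hadj z hzx hzy).mp (G.adj_symm ha)).symm
          have heq : normLap G z x = normLap G z y := by
            simp [normLap, hzx, hzy, ha, ha', hdx, hdy]
          rw [hvx, hvy, heq]; ring
        · have ha' : ¬ G.Adj z y := fun h => ha (G.adj_symm ((hadj z hzx hzy).mpr (G.adj_symm h)))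
          simp [normLap, hzx, hzy, ha, ha']
  · intro k hk w hw0 horth _
    set i0 : Fin k := ⟨0, hk⟩ with hi0
    have hlam : (1 : ℝ) - ((d:ℝ)+1)/d = -(1/d) := by field_simp; ring
    have hF0 : edgeDeriv G (w i0) (((d:ℝ)+1)/d) x y = ((d:ℝ)-1)/d^2 := by
      rw [hw0]
      simp only [edgeDeriv, hvx, hvy, hdx, hdy, hsd, hlam]
      rw [div_pow, one_pow, sq, hb2]
      field_simp
      ring_nf
      rw [Real.sq_sqrt (by norm_num : (0:ℝ) ≤ 2)]
      ring
    have hkey : ∀ i : Fin k, i ≠ i0 → w i x = w i y := by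
      intro i hi
      have h := horth i i0
      rw [if_neg hi, hi0, hw0] at h
      rw [hsum (w i), hvx, hvy] at h
      have h' : (w i x - w i y) * (1 / Real.sqrt 2) = 0 := by linarith
      rcases mul_eq_zero.mp h' with h'' | h''
      · linarith
      · exact absurd h'' (by positivity)
    have hFle : ∀ i : Fin k, i ≠ i0 → edgeDeriv G (w i) (((d:ℝ)+1)/d) x y ≤ 0 := by
      intro i hi
      have he := hkey i hi
      simp only [edgeDeriv, hdx, hdy, hsd, hlam, ← he]
      have h1 : -(1/(d:ℝ)) * (w i x^2/d + w i x^2/d) - 2*(w i x * w i x)/d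
          = -(2*(w i x)^2/(d:ℝ)^2 + 2*(w i x)^2/d) := by
        field_simp; ring
      rw [h1]
      have h2 : (0:ℝ) ≤ 2*(w i x)^2/(d:ℝ)^2 + 2*(w i x)^2/d := by positivity
      linarith
    have hsum_le : ∑ i, edgeDeriv G (w i) (((d:ℝ)+1)/d) x y ≤ ((d:ℝ)-1)/d^2 := by
      rw [← Finset.add_sum_erase _ _ (Finset.mem_univ i0), hF0]
      have h3 : ∑ i ∈ Finset.univ.erase i0, edgeDeriv G (w i) (((d:ℝ)+1)/d) x y ≤ 0 :=
        Finset.sum_nonpos fun i hi => hFle i (Finset.ne_of_mem_erase hi)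
      linarith
    have hknn : (0:ℝ) ≤ 1 / (k:ℝ) := by positivity
    exact mul_le_mul_of_nonneg_left hsum_le hknn
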